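/- Let X and Y be ultrametric spaces and let h : X → Y be a micro-scale equivalence. If X is locally rigid, then Y is locally rigid. -/

import Mathlib

/-- A metric space is locally rigid if every point has an open ball around it
such that every isometry of that ball onto itself is the identity. -/
def LocallyRigid (X : Type*) [MetricSpace X] : Prop :=
  ∀ x : X, ∃ ε > 0, ∀ h : X → X,
    Set.BijOn h (Metric.ball x ε) (Metric.ball x ε) →
    (∀ a ∈ Metric.ball x ε, ∀ b ∈ Metric.ball x ε, dist (h a) (h b) = dist a b) →
    ∀ a ∈ Metric.ball x ε, h a = a

/-- A bijection `h : X → Y` of metric spaces is a micro-scale equivalence if there are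
a homeomorphism `ℓ` of `[0,∞)` onto itself (equivalently, a continuous strictly
increasing bijection of `[0,∞)` onto itself) and `ε > 0` such that
`ℓ (d_X x y) = d_Y (h x) (h y)` whenever `min (d_X x y) (d_Y (h x) (h y)) < ε`. -/
def MicroScaleEquivalence {X Y : Type*} [MetricSpace X] [MetricSpace Y] (h : X → Y) : Prop :=
  Function.Bijective h ∧
    ∃ ℓ : ℝ → ℝ, ContinuousOn ℓ (Set.Ici 0) ∧ Set.BijOn ℓ (Set.Ici 0) (Set.Ici 0) ∧
      StrictMonoOn ℓ (Set.Ici 0) ∧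
      ∃ ε > 0, ∀ x y : X, min (dist x y) (dist (h x) (h y)) < ε →
        ℓ (dist x y) = dist (h x) (h y)

/-- If `X` and `Y` are micro-scale equivalent ultrametric spaces and `X` is locally
rigid, then `Y` is locally rigid. -/
theorem locallyRigid_of_microScaleEquivalence
    {X Y : Type*} [MetricSpace X] [MetricSpace Y]
    (ultraX : ∀ x y z : X, dist x y ≤ max (dist x z) (dist z y))
    (ultraY : ∀ x y z : Y, dist x y ≤ max (dist x z) (dist z y))
    (h : X → Y) (hmse : MicroScaleEquivalence h)
    (hX : LocallyRigid X) :
    LocallyRigid Y := by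
  obtain ⟨hbij, ℓ, hcont, hbijℓ, hmono, ε, hε, hrel⟩ := hmse
  intro y
  obtain ⟨x, rfl⟩ := hbij.2 y
  obtain ⟨εx, hεx, hrig⟩ := hX x
  have h0mem : (0:ℝ) ∈ Set.Ici (0:ℝ) := Set.mem_Ici.mpr (le_refl 0)
  have hℓ0 : ℓ 0 = 0 := by
    obtain ⟨t0, ht0mem, ht0⟩ := hbijℓ.2.2 h0mem
    rcases eq_or_lt_of_le (Set.mem_Ici.mp ht0mem : (0:ℝ) ≤ t0) with h0 | h0
    · rw [← h0] at ht0; exact ht0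
    · have h1 := hmono h0mem ht0mem h0
      have h2 : (0:ℝ) ≤ ℓ 0 := hbijℓ.1 h0mem
      rw [ht0] at h1; linarith
  set s := min εx ε with hs
  have hs0 : 0 < s := lt_min hεx hε
  have hℓs : 0 < ℓ s := by
    have := hmono h0mem (le_of_lt hs0) hs0
    rwa [hℓ0] at this
  set m := min (ℓ s) ε with hm
  have hm0 : 0 < m := lt_min hℓs hε
  obtain ⟨t, ht0, hℓt⟩ := hbijℓ.2.2 (le_of_lt hm0 : m ∈ Set.Ici (0:ℝ))
  have htpos : 0 < t := by
    rcases eq_or_lt_of_le (Set.mem_Ici.mp ht0 : (0:ℝ) ≤ t) with h0 | h0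
    · exfalso; rw [← h0, hℓ0] at hℓt; linarith
    · exact h0
  have hts : t ≤ s := by
    by_contra hc
    push_neg at hc
    have := hmono (le_of_lt hs0) ht0 hc
    rw [hℓt] at this
    have := min_le_left (ℓ s) ε
    linarith
  have htε : t ≤ ε := hts.trans (min_le_right _ _)
  have htεx : t ≤ εx := hts.trans (min_le_left _ _)
  have hℓtε : ℓ t ≤ ε := by rw [hℓt]; exact min_le_right _ _
  have hℓtpos : 0 < ℓ t := by rw [hℓt]; exact hm0
  -- key equivalence
  have key : ∀ u : X, dist u x < t ↔ dist (h u) (h x) < ℓ t := by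
    intro u
    constructor
    · intro hu
      have hrel' := hrel u x (lt_of_le_of_lt (min_le_left _ _) (lt_of_lt_of_le hu htε))
      rw [← hrel']
      exact hmono dist_nonneg ht0 hu
    · intro hu
      have hrel' := hrel u x (lt_of_le_of_lt (min_le_right _ _) (lt_of_lt_of_le hu hℓtε))
      rw [← hrel'] at hu
      exact (hmono.lt_iff_lt dist_nonneg ht0).mp hu
  refine ⟨ℓ t, hℓtpos, ?_⟩
  intro g hgbij hgiso b hb
  set e := Equiv.ofBijective h hbij with he
  have heval : ∀ u : X, e u = h u := fun u => rfl
  have hesymm : ∀ v : Y, h (e.symm v) = v := fun v => e.apply_symm_apply v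
  set g' : X → X := fun a => e.symm (g (h a)) with hg'
  have hg'val : ∀ a : X, h (g' a) = g (h a) := fun a => hesymm _
  -- g' maps small ball to small ball
  have hmapsto : ∀ a : X, dist a x < t → dist (g' a) x < t := by
    intro a ha
    have h1 : h a ∈ Metric.ball (h x) (ℓ t) := by
      rw [Metric.mem_ball]; exact (key a).mp ha
    have h2 := hgbij.1 h1
    rw [Metric.mem_ball] at h2
    rw [← hg'val a] at h2
    exact (key (g' a)).mpr h2
  -- small distances in small ball
  have hsmall : ∀ a : X, dist a x < t → ∀ c : X, dist c x < t → dist a c < t := by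
    intro a ha c hc
    calc dist a c ≤ max (dist a x) (dist x c) := ultraX a c x
    _ < t := max_lt ha (by rwa [dist_comm])
  -- g' is an isometry on the small ball
  have hiso : ∀ a : X, dist a x < t → ∀ c : X, dist c x < t → dist (g' a) (g' c) = dist a c := by
    intro a ha c hc
    have hac : dist a c < t := hsmall a ha c hc
    have hr1 := hrel a c (lt_of_le_of_lt (min_le_left _ _) (lt_of_lt_of_le hac htε))
    have hha : h a ∈ Metric.ball (h x) (ℓ t) := by rw [Metric.mem_ball]; exact (key a).mp ha
    have hhc : h c ∈ Metric.ball (h x) (ℓ t) := by rw [Metric.mem_ball]; exact (key c).mp hc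
    have hg := hgiso (h a) hha (h c) hhc
    have hℓac : ℓ (dist a c) < ℓ t := hmono dist_nonneg ht0 hac
    have hd : dist (h (g' a)) (h (g' c)) = ℓ (dist a c) := by
      rw [hg'val, hg'val, hg, ← hr1]
    have hr2 := hrel (g' a) (g' c)
      (lt_of_le_of_lt (min_le_right _ _) (by rw [hd]; exact lt_of_lt_of_le hℓac hℓtε))
    rw [hd] at hr2
    have := hbijℓ.2.1 (dist_nonneg : (0:ℝ) ≤ dist (g' a) (g' c)) (dist_nonneg : (0:ℝ) ≤ dist a c) hr2
    rw [this]
  -- g' is injective on small ball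
  have hinj : ∀ a : X, dist a x < t → ∀ c : X, dist c x < t → g' a = g' c → a = c := by
    intro a ha c hc hac
    have := hiso a ha c hc
    rw [hac, dist_self] at this
    exact (dist_eq_zero.mp this.symm)
  -- g' is surjective on small ball
  have hsurj : ∀ b' : X, dist b' x < t → ∃ a : X, dist a x < t ∧ g' a = b' := by
    intro b' hb'
    have h1 : h b' ∈ Metric.ball (h x) (ℓ t) := by rw [Metric.mem_ball]; exact (key b').mp hb'
    obtain ⟨c, hc, hgc⟩ := hgbij.2.2 h1
    rw [Metric.mem_ball] at hc
    refine ⟨e.symm c, ?_, ?_⟩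
    · apply (key _).mpr; rw [hesymm]; exact hc
    · show e.symm (g (h (e.symm c))) = b'
      rw [hesymm, hgc]
      exact e.symm_apply_apply b'
  -- extension G of g' by identity
  set G : X → X := fun a => if dist a x < t then g' a else a with hG
  have hGball : Set.BijOn G (Metric.ball x εx) (Metric.ball x εx) := by
    refine ⟨?_, ?_, ?_⟩
    · intro a ha
      rw [Metric.mem_ball] at ha ⊢
      by_cases hat : dist a x < t
      · simp only [hG, if_pos hat]
        exact lt_of_lt_of_le (hmapsto a hat) htεx
      · simp only [hG, if_neg hat]; exact ha
    · intro a ha c hc hac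
      simp only [hG] at hac
      by_cases hat : dist a x < t <;> by_cases hct : dist c x < t
      · rw [if_pos hat, if_pos hct] at hac; exact hinj a hat c hct hac
      · rw [if_pos hat, if_neg hct] at hac
        have hp := hmapsto a hat; rw [hac] at hp; exact absurd hp hct
      · rw [if_neg hat, if_pos hct] at hac
        have hp := hmapsto c hct; rw [← hac] at hp; exact absurd hp hat
      · rw [if_neg hat, if_neg hct] at hac; exact hac
    · intro b' hb'
      rw [Metric.mem_ball] at hb'
      by_cases hbt : dist b' x < t
      · obtain ⟨a, ha, hga⟩ := hsurj b' hbt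
        refine ⟨a, ?_, ?_⟩
        · rw [Metric.mem_ball]; exact lt_of_lt_of_le ha htεx
        · simp only [hG, if_pos ha]; exact hga
      · exact ⟨b', Metric.mem_ball.mpr hb', by simp only [hG, if_neg hbt]⟩
  -- crossing distance lemma
  have hcross : ∀ u v : X, dist u x < t → ¬ (dist v x < t) → dist u v = dist v x := by
    intro u v hu hv
    push_neg at hv
    have h1 : dist u v ≤ dist v x := by
      calc dist u v ≤ max (dist u x) (dist x v) := ultraX u v x
      _ = dist v x := by
        rw [max_eq_right]; · rw [dist_comm]
        rw [dist_comm x v]; exact le_of_lt (lt_of_lt_of_le hu hv)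
    have h2 : dist v x ≤ dist u v := by
      have := ultraX v x u
      rcases max_cases (dist v u) (dist u x) with ⟨hm1, _⟩ | ⟨hm1, hm2⟩
      · rw [hm1] at this; rwa [dist_comm v u] at this
      · exfalso
        rw [hm1] at this
        exact absurd (lt_of_le_of_lt (hv.trans this) hu) (lt_irrefl _)
    linarith
  have hGiso : ∀ a ∈ Metric.ball x εx, ∀ c ∈ Metric.ball x εx, dist (G a) (G c) = dist a c := by
    intro a _ c _
    by_cases hat : dist a x < t <;> by_cases hct : dist c x < t
    · simp only [hG, if_pos hat, if_pos hct]; exact hiso a hat c hct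
    · simp only [hG, if_pos hat, if_neg hct]
      rw [hcross (g' a) c (hmapsto a hat) hct, hcross a c hat hct]
    · simp only [hG, if_neg hat, if_pos hct]
      rw [dist_comm, hcross (g' c) a (hmapsto c hct) hat, dist_comm a c,
        hcross c a hct hat]
    · simp only [hG, if_neg hat, if_neg hct]
  -- apply rigidity
  have hGid := hrig G hGball hGiso
  -- conclude
  rw [Metric.mem_ball] at hb
  obtain ⟨a, rfl⟩ := hbij.2 b
  have hat : dist a x < t := (key a).mpr hb
  have := hGid a (Metric.mem_ball.mpr (lt_of_lt_of_le hat htεx))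
  simp only [hG, if_pos hat] at this
  have h1 : h (g' a) = h a := by rw [this]
  rw [hg'val] at h1
  exact h1
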